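/- Let n ≥ 1, let π be a permutation of {1,…,n}, and let 0 ≤ j ≤ a ≤ n. Let f_{j,i}(π) = #{C ⊆ {1,…,n} : |C| = j, |π(C) ∩ C| = i}. Then ∑_{A ⊆ {1,…,n}, |A| = a} C(|A ∩ π(A)|, j) = ∑_{i=0}^{j} C(n−2j+i, a−2j+i) · f_{j,i}(π), where binomial coefficients with out-of-range arguments are zero. -/

import Mathlib

/-- Binomial coefficient with integer arguments, zero when an argument is out of range. -/
def intChoose (m t : ℤ) : ℕ := if 0 ≤ t ∧ t ≤ m then m.toNat.choose t.toNat else 0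

open Finset

/-- The number of `a`-element subsets of `Fin n` containing a fixed set `D`. -/
lemma card_supersets {n : ℕ} (D : Finset (Fin n)) (a : ℕ) (han : a ≤ n) :
    (Finset.univ.filter fun A : Finset (Fin n) => A.card = a ∧ D ⊆ A).card
      = (n - D.card).choose (n - a) := by
  have h : (Finset.univ.filter fun A : Finset (Fin n) => A.card = a ∧ D ⊆ A).card
      = (Dᶜ.powersetCard (n - a)).card := by
    apply Finset.card_nbij' (fun A => Aᶜ) (fun B => Bᶜ)
    · intro A hA
      simp only [mem_filter, mem_univ, true_and, Finset.mem_coe] at hA ⊢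
      rw [Finset.mem_powersetCard]
      constructor
      · exact Finset.compl_subset_compl.mpr hA.2
      · rw [Finset.card_compl, hA.1, Fintype.card_fin]
    · intro B hB
      rw [Finset.mem_coe, Finset.mem_powersetCard] at hB
      simp only [mem_filter, mem_univ, true_and, Finset.mem_coe]
      constructor
      · rw [Finset.card_compl, hB.2, Fintype.card_fin]
        omega
      · rw [← Finset.compl_subset_compl, compl_compl]
        exact hB.1
    · intro A _; simp
    · intro B _; simp
  rw [h, Finset.card_powersetCard, Finset.card_compl, Fintype.card_fin]

/-- The counting identity `∑_{|A|=a} C(|A ∩ π(A)|, j) = ∑_{i=0}^{j} C(n−2j+i, a−2j+i) f_{j,i}(π)`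
from the proof of Proposition A.3. -/
theorem sum_choose_inter_image_eq (n : ℕ) (hn : 1 ≤ n) (π : Equiv.Perm (Fin n))
    (a j : ℕ) (hja : j ≤ a) (han : a ≤ n)
    (f : ℕ → ℕ → Equiv.Perm (Fin n) → ℕ)
    (hf : ∀ b k σ, f b k σ = (Finset.univ.filter fun C : Finset (Fin n) =>
      C.card = b ∧ (C.image σ ∩ C).card = k).card) :
    ∑ A ∈ Finset.univ.filter (fun A : Finset (Fin n) => A.card = a),
        (A ∩ A.image π).card.choose j =
      ∑ i ∈ Finset.range (j + 1),
        intChoose ((n : ℤ) - 2 * j + i) ((a : ℤ) - 2 * j + i) * f j i π := by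
  classical
  set ι : Finset (Fin n) → ℕ := fun C => (C.image π ∩ C).card with hι
  -- key facts about a set `C` of cardinality `j`
  have hCfacts : ∀ C : Finset (Fin n), C.card = j →
      ι C ≤ j ∧ (C ∪ C.image π.symm).card = 2 * j - ι C ∧ ι C ≤ 2 * j ∧
        (C ∪ C.image π.symm).card ≤ n := by
    intro C hC
    have hiC : ι C ≤ j := by
      rw [hι]
      calc (C.image π ∩ C).card ≤ C.card := Finset.card_le_card Finset.inter_subset_right
        _ = j := hC
    have hD : (C.image π.symm).card = j := by
      rw [Finset.card_image_of_injective _ π.symm.injective, hC]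
    have hinter : (C ∩ C.image π.symm).card = ι C := by
      have h1 : (C ∩ C.image π.symm).image π = C.image π ∩ C := by
        rw [Finset.image_inter _ _ π.injective]
        congr 1
        rw [Finset.image_image]
        simp
      show (C ∩ C.image π.symm).card = (C.image π ∩ C).card
      rw [← h1, Finset.card_image_of_injective _ π.injective]
    have hu := Finset.card_union_add_card_inter C (C.image π.symm)
    rw [hC, hD, hinter] at hu
    refine ⟨hiC, by omega, by omega, ?_⟩
    calc (C ∪ C.image π.symm).card ≤ (Finset.univ : Finset (Fin n)).card :=
          Finset.card_le_card (Finset.subset_univ _)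
      _ = n := by simp
  calc ∑ A ∈ Finset.univ.filter (fun A : Finset (Fin n) => A.card = a),
          (A ∩ A.image π).card.choose j
      = ∑ A ∈ Finset.univ.filter (fun A : Finset (Fin n) => A.card = a),
          ∑ C ∈ (Finset.univ : Finset (Finset (Fin n))),
            (if C.card = j ∧ C ⊆ A ∧ C ⊆ A.image π then 1 else 0) := by
        refine Finset.sum_congr rfl fun A _ => ?_
        rw [← Finset.card_powersetCard]
        have : (A ∩ A.image π).powersetCard j
            = Finset.univ.filter fun C : Finset (Fin n) =>
                C.card = j ∧ C ⊆ A ∧ C ⊆ A.image π := by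
          ext C
          simp [Finset.mem_powersetCard, Finset.subset_inter_iff, and_comm]
        rw [this, Finset.card_filter]
    _ = ∑ C ∈ (Finset.univ : Finset (Finset (Fin n))),
          ∑ A ∈ Finset.univ.filter (fun A : Finset (Fin n) => A.card = a),
            (if C.card = j ∧ C ⊆ A ∧ C ⊆ A.image π then 1 else 0) := Finset.sum_comm
    _ = ∑ C ∈ Finset.univ.filter (fun C : Finset (Fin n) => C.card = j),
          (n - (2 * j - ι C)).choose (n - a) := by
        rw [Finset.sum_filter]
        refine Finset.sum_congr rfl fun C _ => ?_
        by_cases hC : C.card = j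
        · simp only [hC, true_and, if_true]
          have hsub : ∀ A : Finset (Fin n), (C ⊆ A ∧ C ⊆ A.image π) ↔
              (C ∪ C.image π.symm) ⊆ A := by
            intro A
            rw [Finset.union_subset_iff]
            constructor <;> rintro ⟨h1, h2⟩ <;> refine ⟨h1, ?_⟩
            · intro x hx
              rw [Finset.mem_image] at hx
              obtain ⟨y, hy, rfl⟩ := hx
              have := h2 hy
              rw [Finset.mem_image] at this
              obtain ⟨z, hz, hzy⟩ := this
              have : z = π.symm y := by rw [← hzy]; simp
              rwa [← this]
            · intro x hx
              rw [Finset.mem_image]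
              exact ⟨π.symm x, h2 (Finset.mem_image_of_mem _ hx), by simp⟩
          have : ∑ A ∈ Finset.univ.filter (fun A : Finset (Fin n) => A.card = a),
              (if C ⊆ A ∧ C ⊆ A.image π then 1 else 0)
              = (Finset.univ.filter fun A : Finset (Fin n) =>
                  A.card = a ∧ (C ∪ C.image π.symm) ⊆ A).card := by
            rw [Finset.card_filter, Finset.sum_filter]
            refine Finset.sum_congr rfl fun A _ => ?_
            simp only [hsub]
            by_cases h1 : A.card = a <;> simp [h1]
          rw [this, card_supersets _ _ han, (hCfacts C hC).2.1]
        · simp [hC]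
    _ = ∑ C ∈ Finset.univ.filter (fun C : Finset (Fin n) => C.card = j),
          intChoose ((n : ℤ) - 2 * j + ι C) ((a : ℤ) - 2 * j + ι C) := by
        refine Finset.sum_congr rfl fun C hC => ?_
        rw [Finset.mem_filter] at hC
        obtain ⟨hij, hcard, _, hdn⟩ := hCfacts C hC.2
        rw [hcard] at hdn
        unfold intChoose
        by_cases ht : 2 * j ≤ a + ι C
        · have h0 : (0 : ℤ) ≤ (a : ℤ) - 2 * j + ι C := by push_cast; omega
          have h1 : (a : ℤ) - 2 * j + ι C ≤ (n : ℤ) - 2 * j + ι C := by push_cast; omega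
          rw [if_pos ⟨h0, h1⟩]
          have e1 : ((n : ℤ) - 2 * j + ι C).toNat = n - (2 * j - ι C) := by omega
          have e2 : ((a : ℤ) - 2 * j + ι C).toNat = a - (2 * j - ι C) := by omega
          rw [e1, e2]
          have h3 : a - (2 * j - ι C) ≤ n - (2 * j - ι C) := by omega
          rw [← Nat.choose_symm h3]
          congr 1
          omega
        · rw [if_neg (by push_cast; omega)]
          apply Nat.choose_eq_zero_of_lt
          omega
    _ = ∑ i ∈ Finset.range (j + 1),
          intChoose ((n : ℤ) - 2 * j + i) ((a : ℤ) - 2 * j + i) * f j i π := by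
        rw [← Finset.sum_fiberwise_of_maps_to (g := ι)
          (t := Finset.range (j + 1)) (fun C hC => by
            rw [Finset.mem_filter] at hC
            exact Finset.mem_range.mpr (Nat.lt_succ_of_le (hCfacts C hC.2).1))]
        refine Finset.sum_congr rfl fun i _ => ?_
        have hconst : ∑ C ∈ (Finset.univ.filter
              (fun C : Finset (Fin n) => C.card = j)).filter (fun C => ι C = i),
            intChoose ((n : ℤ) - 2 * j + ι C) ((a : ℤ) - 2 * j + ι C)
            = ∑ _C ∈ (Finset.univ.filter
              (fun C : Finset (Fin n) => C.card = j)).filter (fun C => ι C = i),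
            intChoose ((n : ℤ) - 2 * j + i) ((a : ℤ) - 2 * j + i) := by
          refine Finset.sum_congr rfl fun C hC => ?_
          rw [Finset.mem_filter] at hC
          rw [hC.2]
        rw [hconst, Finset.sum_const, smul_eq_mul, mul_comm, hf]
        congr 1
        rw [Finset.filter_filter]
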